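/- Let C : y^2 + Q(x)y = P(x) and D : z^2 + T(u)z = S(u) be two odd-degree hyperelliptic equations of genus g over a field K of characteristic not 2 defining isomorphic curves, related by x = e^2 u + r, y = e^{2g+1} z + t(u) with e ∈ K*, r ∈ K, t ∈ K[u] of degree ≤ g. Then their discriminants satisfy Δ_D = Δ_C · e^{-4g(2g+1)}. -/

import Mathlib

open Polynomial Finset

private lemma exists_comp_perm {α : Type*} : ∀ {n : ℕ} (f g : Fin n → α),
    (List.ofFn f).Perm (List.ofFn g) → ∃ σ : Equiv.Perm (Fin n), f = g ∘ σ := by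
  intro n
  induction n with
  | zero => exact fun f g _ => ⟨1, funext fun i => i.elim0⟩
  | succ n ih =>
    intro f g h
    have hmem : f 0 ∈ List.ofFn g := h.mem_iff.mp (by
      rw [List.mem_ofFn]; exact ⟨0, rfl⟩)
    obtain ⟨j, hj⟩ := List.mem_ofFn.mp hmem
    set g' : Fin (n + 1) → α := g ∘ Equiv.swap 0 j with hg'
    have hperm : (List.ofFn g').Perm (List.ofFn g) := Equiv.Perm.ofFn_comp_perm _ g
    have h' : (List.ofFn f).Perm (List.ofFn g') := h.trans hperm.symm
    have h0 : g' 0 = f 0 := by simp [hg', Equiv.swap_apply_left, hj]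
    rw [List.ofFn_succ, List.ofFn_succ, h0] at h'
    have htail := (List.perm_cons _).mp h'
    obtain ⟨τ, hτ⟩ := ih (fun i => f i.succ) (fun i => g' i.succ) htail
    refine ⟨(Equiv.Perm.decomposeFin.symm (0, τ)).trans (Equiv.swap 0 j), funext fun i => ?_⟩
    refine Fin.cases ?_ (fun i => ?_) i
    · simp [hg', Equiv.Perm.decomposeFin_symm_apply_zero, Equiv.swap_apply_left, hj]
    · have := congrFun hτ i
      simp only [Function.comp_apply] at this ⊢
      rw [this]
      simp [hg', Equiv.Perm.decomposeFin_symm_apply_succ]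

private lemma sq_vandermonde {R : Type*} [CommRing R] {n : ℕ} (x : Fin n → R) :
    ∏ i : Fin n, ∏ j ∈ Finset.univ.filter (fun j => i < j), (x i - x j) ^ 2 =
      (Matrix.det (Matrix.vandermonde x)) ^ 2 := by
  rw [Matrix.det_vandermonde, ← Finset.prod_pow]
  refine Finset.prod_congr rfl fun i _ => ?_
  rw [← Finset.prod_pow]
  have hfilt : Finset.univ.filter (fun j => i < j) = Finset.Ioi i := by ext j; simp
  rw [hfilt]
  exact Finset.prod_congr rfl fun j _ => by ring

private lemma prod_sq_comp_perm {R : Type*} [CommRing R] {n : ℕ} (x : Fin n → R)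
    (σ : Equiv.Perm (Fin n)) :
    ∏ i : Fin n, ∏ j ∈ Finset.univ.filter (fun j => i < j), (x (σ i) - x (σ j)) ^ 2 =
      ∏ i : Fin n, ∏ j ∈ Finset.univ.filter (fun j => i < j), (x i - x j) ^ 2 := by
  have h1 : ((Equiv.Perm.sign σ : ℤ) : R) ^ 2 = 1 := by
    rcases Int.units_eq_one_or (Equiv.Perm.sign σ) with h | h <;> rw [h] <;> norm_num
  have hsub : Matrix.vandermonde (x ∘ σ) = (Matrix.vandermonde x).submatrix σ id := by
    ext i j; simp [Matrix.vandermonde]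
  calc ∏ i : Fin n, ∏ j ∈ Finset.univ.filter (fun j => i < j), (x (σ i) - x (σ j)) ^ 2
      = (Matrix.det (Matrix.vandermonde (x ∘ σ))) ^ 2 := sq_vandermonde (x ∘ σ)
    _ = (Matrix.det (Matrix.vandermonde x)) ^ 2 := by
        rw [hsub, Matrix.det_permute, mul_pow, h1, one_mul]
    _ = _ := (sq_vandermonde x).symm

theorem hyperelliptic_discriminant_transformation (K : Type*) [Field K] (h2 : (2 : K) ≠ 0)
    (g : ℕ) (hg : 0 < g)
    (P Q S T t : K[X]) (e c : K) (he : e ≠ 0)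
    (hP : P.Monic) (hPdeg : P.natDegree = 2 * g + 1) (hQ : Q.natDegree ≤ g)
    (hS : S.Monic) (hSdeg : S.natDegree = 2 * g + 1) (hT : T.natDegree ≤ g)
    (ht : t.natDegree ≤ g)
    (hrel1 : Q.comp (Polynomial.C (e ^ 2) * Polynomial.X + Polynomial.C c) + 2 * t =
      Polynomial.C (e ^ (2 * g + 1)) * T)
    (hrel2 : P.comp (Polynomial.C (e ^ 2) * Polynomial.X + Polynomial.C c) - t ^ 2 -
        Q.comp (Polynomial.C (e ^ 2) * Polynomial.X + Polynomial.C c) * t =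
      Polynomial.C (e ^ (2 * (2 * g + 1))) * S)
    (L : Type*) [Field L] [Algebra K L] [IsAlgClosure K L]
    (β γ : Fin (2 * g + 1) → L)
    (hβ : (P + Q ^ 2 * Polynomial.C ((4 : K)⁻¹)).map (algebraMap K L) =
      ∏ i : Fin (2 * g + 1), (Polynomial.X - Polynomial.C (β i)))
    (hγ : (S + T ^ 2 * Polynomial.C ((4 : K)⁻¹)).map (algebraMap K L) =
      ∏ i : Fin (2 * g + 1), (Polynomial.X - Polynomial.C (γ i))) :
    (2 : L) ^ (4 * g) *
        ∏ i : Fin (2 * g + 1), ∏ j ∈ Finset.univ.filter (fun j => i < j), (γ i - γ j) ^ 2 =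
      ((2 : L) ^ (4 * g) *
          ∏ i : Fin (2 * g + 1), ∏ j ∈ Finset.univ.filter (fun j => i < j), (β i - β j) ^ 2) *
        (algebraMap K L e ^ (4 * g * (2 * g + 1)))⁻¹ := by
  set z : K[X] := Polynomial.C (e ^ 2) * Polynomial.X + Polynomial.C c with hz
  have h4 : (4 : K) ≠ 0 := by
    have := mul_ne_zero h2 h2; norm_num at this ⊢; exact this
  have hC2 : (Polynomial.C (e ^ (2 * g + 1)) : K[X]) ^ 2 = Polynomial.C (e ^ (2 * (2 * g + 1))) := by
    rw [← C_pow, ← pow_mul]; ring_nf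
  have h4inv : (Polynomial.C ((4 : K)⁻¹) : K[X]) * 4 = 1 := by
    rw [show (4 : K[X]) = Polynomial.C (4 : K) from (map_ofNat Polynomial.C 4).symm,
      ← C_mul, inv_mul_cancel₀ h4, C_1]
  have hR : (P + Q ^ 2 * Polynomial.C ((4 : K)⁻¹)).comp z =
      Polynomial.C (e ^ (2 * (2 * g + 1))) * (S + T ^ 2 * Polynomial.C ((4 : K)⁻¹)) := by
    rw [add_comp, mul_comp, pow_comp, C_comp]
    linear_combination hrel2
      + Polynomial.C ((4:K)⁻¹) * (Q.comp z + 2 * t + Polynomial.C (e ^ (2 * g + 1)) * T) * hrel1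
      + Polynomial.C ((4:K)⁻¹) * T ^ 2 * hC2
      - (t ^ 2 + Q.comp z * t) * h4inv
  -- map to L
  set φ := algebraMap K L with hφ
  set ε : L := φ e with hε
  have hεne : ε ≠ 0 := fun h => he ((algebraMap K L).injective (by rw [hε] at h; rw [h, map_zero]))
  set b : Fin (2 * g + 1) → L := fun i => (β i - φ c) * (ε ^ 2)⁻¹ with hb
  have hmap : (∏ i : Fin (2 * g + 1), (Polynomial.X - Polynomial.C (β i))).comp
        (Polynomial.C (ε ^ 2) * Polynomial.X + Polynomial.C (φ c)) =
      Polynomial.C (ε ^ (2 * (2 * g + 1))) * ∏ i : Fin (2 * g + 1), (Polynomial.X - Polynomial.C (γ i)) := by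
    have h := congrArg (Polynomial.map φ) hR
    rw [Polynomial.map_comp, hβ, Polynomial.map_mul, hγ, Polynomial.map_C] at h
    rw [hz] at h
    rw [Polynomial.map_add, Polynomial.map_mul, Polynomial.map_C, Polynomial.map_C,
      Polynomial.map_X] at h
    simpa [map_pow] using h
  have hprod : (∏ i : Fin (2 * g + 1), (Polynomial.X - Polynomial.C (b i))) =
      ∏ i : Fin (2 * g + 1), (Polynomial.X - Polynomial.C (γ i)) := by
    have hfac : ∀ i : Fin (2 * g + 1), (Polynomial.X - Polynomial.C (β i)).comp
        (Polynomial.C (ε ^ 2) * Polynomial.X + Polynomial.C (φ c)) =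
        Polynomial.C (ε ^ 2) * (Polynomial.X - Polynomial.C (b i)) := by
      intro i
      have hεb : ε ^ 2 * b i = β i - φ c := by
        rw [hb]; field_simp
      rw [sub_comp, X_comp, C_comp, mul_sub, ← C_mul, hεb, C_sub]
      ring
    rw [Polynomial.prod_comp] at hmap
    simp only [hfac] at hmap
    rw [Finset.prod_mul_distrib, Finset.prod_const, Finset.card_univ, Fintype.card_fin,
      ← C_pow, ← pow_mul] at hmap
    exact mul_left_cancel₀ (by simp [pow_ne_zero, hεne] : (Polynomial.C (ε ^ (2 * (2 * g + 1))) : L[X]) ≠ 0)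
      (by rw [hmap])
  -- multiset equality and a permutation
  have hms : (Multiset.map b Finset.univ.val) = (Multiset.map γ Finset.univ.val) := by
    have h1 : (Multiset.map (fun a => Polynomial.X - Polynomial.C a)
        (Multiset.map b Finset.univ.val)).prod =
        (Multiset.map (fun a => Polynomial.X - Polynomial.C a)
        (Multiset.map γ Finset.univ.val)).prod := by
      rw [Multiset.map_map, Multiset.map_map]
      exact hprod
    have := congrArg Polynomial.roots h1
    rwa [roots_multiset_prod_X_sub_C, roots_multiset_prod_X_sub_C] at this
  have hlist : (List.ofFn γ).Perm (List.ofFn b) := by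
    rw [← Multiset.coe_eq_coe, ← Fin.univ_val_map, ← Fin.univ_val_map]
    exact hms.symm
  obtain ⟨σ, hσ⟩ := exists_comp_perm γ b hlist
  -- transfer the double product
  have hDγ : (∏ i : Fin (2 * g + 1), ∏ j ∈ Finset.univ.filter (fun j => i < j), (γ i - γ j) ^ 2) =
      ∏ i : Fin (2 * g + 1), ∏ j ∈ Finset.univ.filter (fun j => i < j), (b i - b j) ^ 2 := by
    calc (∏ i : Fin (2 * g + 1), ∏ j ∈ Finset.univ.filter (fun j => i < j), (γ i - γ j) ^ 2)
        = ∏ i : Fin (2 * g + 1), ∏ j ∈ Finset.univ.filter (fun j => i < j), (b (σ i) - b (σ j)) ^ 2 := by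
          rw [hσ]; rfl
      _ = _ := prod_sq_comp_perm b σ
  -- compute the b-product in terms of β
  have hNcard : ∀ i : Fin (2 * g + 1), (Finset.univ.filter (fun j => i < j)).card = 2 * g - i := by
    intro i
    have : Finset.univ.filter (fun j => i < j) = Finset.Ioi i := by ext j; simp
    rw [this, Fin.card_Ioi]; omega
  have hNsum : (∑ i : Fin (2 * g + 1), (2 * g - (i : ℕ))) = g * (2 * g + 1) := by
    rw [Fin.sum_univ_eq_sum_range (fun i => 2 * g - i)]
    have hr : (∑ i ∈ Finset.range (2 * g + 1), (2 * g - i)) =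
        ∑ i ∈ Finset.range (2 * g + 1), i :=
      (Finset.sum_congr rfl fun i _ => by omega).trans
        (Finset.sum_range_reflect (fun i => i) (2 * g + 1))
    rw [hr]
    have h2' := Finset.sum_range_id_mul_two (2 * g + 1)
    have hx : (∑ i ∈ Finset.range (2 * g + 1), i) * 2 = (g * (2 * g + 1)) * 2 := by
      rw [h2', Nat.add_sub_cancel]; ring
    exact Nat.eq_of_mul_eq_mul_right (by norm_num) hx
  have hDb : (∏ i : Fin (2 * g + 1), ∏ j ∈ Finset.univ.filter (fun j => i < j), (b i - b j) ^ 2) =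
      ((ε ^ 4)⁻¹) ^ (g * (2 * g + 1)) *
        ∏ i : Fin (2 * g + 1), ∏ j ∈ Finset.univ.filter (fun j => i < j), (β i - β j) ^ 2 := by
    have hbij : ∀ i j : Fin (2 * g + 1), (b i - b j) ^ 2 = (ε ^ 4)⁻¹ * (β i - β j) ^ 2 := by
      intro i j
      have hd : b i - b j = (β i - β j) * (ε ^ 2)⁻¹ := by rw [hb]; ring
      rw [hd, mul_pow, ← inv_pow, ← pow_mul]
      norm_num
      ring
    calc (∏ i : Fin (2 * g + 1), ∏ j ∈ Finset.univ.filter (fun j => i < j), (b i - b j) ^ 2)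
        = ∏ i : Fin (2 * g + 1), ∏ j ∈ Finset.univ.filter (fun j => i < j),
            ((ε ^ 4)⁻¹ * (β i - β j) ^ 2) := by
          exact Finset.prod_congr rfl fun i _ => Finset.prod_congr rfl fun j _ => hbij i j
      _ = ∏ i : Fin (2 * g + 1), (((ε ^ 4)⁻¹) ^ (2 * g - (i : ℕ)) *
            ∏ j ∈ Finset.univ.filter (fun j => i < j), (β i - β j) ^ 2) := by
          refine Finset.prod_congr rfl fun i _ => ?_
          rw [Finset.prod_mul_distrib, Finset.prod_const, hNcard i]
      _ = _ := by
          rw [Finset.prod_mul_distrib, Finset.prod_pow_eq_pow_sum, hNsum]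
  rw [hDγ, hDb, ← inv_pow, ← pow_mul]
  have : 4 * (g * (2 * g + 1)) = 4 * g * (2 * g + 1) := by ring
  rw [this]
  ring
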